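/- Suppose X and Y are unit Fréchet random variables such that P(X/Y < z) = 1 for some finite z > 1. Then liminf_{u→∞} P(X > u | Y > u) ≥ 1/z > 0; in particular X and Y are not tail independent (the tail dependence index λ, if it exists, is at least 1/z). -/

import Mathlib

open MeasureTheory Real Filter

/-- If `X` and `Y` are unit Fréchet random variables with `P(X/Y < z) = 1` for some
finite `z > 1`, then `liminf_{u→∞} P(X > u | Y > u) ≥ 1/z > 0`; in particular `X` and
`Y` are not tail independent. -/
theorem bounded_ratio_not_tail_independent {Ω : Type*} [MeasurableSpace Ω]
    (μ : Measure Ω) [IsProbabilityMeasure μ] (X Y : Ω → ℝ)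
    (hX : Measurable X) (hY : Measurable Y)
    (hXpos : ∀ᵐ ω ∂μ, 0 < X ω) (hYpos : ∀ᵐ ω ∂μ, 0 < Y ω)
    (hXF : ∀ x : ℝ, 0 < x → μ {ω | X ω ≤ x} = ENNReal.ofReal (exp (-1 / x)))
    (hYF : ∀ x : ℝ, 0 < x → μ {ω | Y ω ≤ x} = ENNReal.ofReal (exp (-1 / x)))
    (z : ℝ) (hz : 1 < z) (hbound : μ {ω | X ω / Y ω < z} = 1) :
    1 / z ≤ liminf (fun u : ℝ =>
        (μ {ω | u < X ω ∧ u < Y ω}).toReal / (μ {ω | u < Y ω}).toReal) atTop ∧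
    0 < 1 / z := by
  have hz0 : (0:ℝ) < z := lt_trans one_pos hz
  refine ⟨?_, by positivity⟩
  set g : ℝ → ℝ := fun u =>
    (μ {ω | u < X ω ∧ u < Y ω}).toReal / (μ {ω | u < Y ω}).toReal with hgdef
  -- Survival function of a unit Fréchet variable
  have survival : ∀ (W : Ω → ℝ), Measurable W →
      (∀ x : ℝ, 0 < x → μ {ω | W ω ≤ x} = ENNReal.ofReal (exp (-1 / x))) →
      ∀ x : ℝ, 0 < x → (μ {ω | x < W ω}).toReal = 1 - exp (-1 / x) := by
    intro W hW hWF x hx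
    have hset : {ω | x < W ω} = {ω | W ω ≤ x}ᶜ := by
      ext ω; simp [not_le]
    have hexp : (-1:ℝ) / x ≤ 0 := by
      rw [neg_div]; exact neg_nonpos.mpr (by positivity)
    have hle1 : ENNReal.ofReal (exp (-1 / x)) ≤ 1 :=
      ENNReal.ofReal_le_one.mpr (exp_le_one_iff.mpr hexp)
    have hm : MeasurableSet {ω | W ω ≤ x} := hW measurableSet_Iic
    rw [hset, measure_compl hm (measure_ne_top μ _), hWF x hx,
      measure_univ, ENNReal.toReal_sub_of_le hle1 ENNReal.one_ne_top,
      ENNReal.toReal_one, ENNReal.toReal_ofReal (exp_nonneg _)]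
  -- a.e. facts
  have hae : ∀ᵐ ω ∂μ, X ω / Y ω < z := by
    rw [ae_iff]
    have : {ω | ¬ X ω / Y ω < z} = {ω | X ω / Y ω < z}ᶜ := rfl
    have hm : MeasurableSet {ω | X ω / Y ω < z} := (hX.div hY) measurableSet_Iio
    rw [this, measure_compl hm (measure_ne_top μ _),
      hbound, measure_univ, tsub_self]
  have hfull : ∀ᵐ ω ∂μ, X ω / Y ω < z ∧ 0 < Y ω := hae.and hYpos
  -- comparison function
  set F : ℝ → ℝ := fun u => (1 - exp (-1 / (z * u))) / (1 - exp (-1 / u)) with hFdef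
  -- eventually F ≤ g
  have hFle : ∀ᶠ u in atTop, F u ≤ g u := by
    filter_upwards [eventually_gt_atTop (0:ℝ)] with u hu
    have hzu : 0 < z * u := by positivity
    have hden : (0:ℝ) < 1 - exp (-1 / u) := by
      have : exp (-1 / u) < 1 := exp_lt_one_iff.mpr (by
        rw [neg_div]; exact neg_neg_iff_pos.mpr (by positivity))
      linarith
    have hsub : {ω | z * u < X ω} ≤ᶠ[ae μ] {ω | u < X ω ∧ u < Y ω} := by
      filter_upwards [hfull] with ω hω hmem
      have hX' : z * u < X ω := hmem
      have hYω : 0 < Y ω := hω.2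
      have hXY : X ω < z * Y ω := (div_lt_iff₀ hYω).mp hω.1
      constructor
      · nlinarith
      · nlinarith
    have hnum : 1 - exp (-1 / (z * u)) ≤ (μ {ω | u < X ω ∧ u < Y ω}).toReal := by
      rw [← survival X hX hXF (z * u) hzu]
      exact (ENNReal.toReal_le_toReal (measure_ne_top μ _) (measure_ne_top μ _)).mpr
        (measure_mono_ae hsub)
    have hdeneq : (μ {ω | u < Y ω}).toReal = 1 - exp (-1 / u) := survival Y hY hYF u hu
    show F u ≤ g u
    rw [hgdef]
    simp only
    rw [hdeneq, hFdef]
    exact (div_le_div_iff_of_pos_right hden).mpr hnum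
  -- slope of exp at 0
  have hslope : Tendsto (fun y : ℝ => (exp y - 1) / y) (nhdsWithin 0 {0}ᶜ) (nhds 1) := by
    have h := Real.hasDerivAt_exp 0
    rw [hasDerivAt_iff_tendsto_slope] at h
    simpa [slope_fun_def, Real.exp_zero, div_eq_inv_mul] using h
  have hneg : Tendsto (fun u : ℝ => -1 / u) atTop (nhdsWithin 0 {0}ᶜ) := by
    rw [tendsto_nhdsWithin_iff]
    constructor
    · simpa [neg_div, one_div] using (tendsto_inv_atTop_zero (𝕜 := ℝ)).neg
    · filter_upwards [eventually_gt_atTop (0:ℝ)] with u hu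
      simp only [Set.mem_compl_iff, Set.mem_singleton_iff]
      exact ne_of_lt (div_neg_of_neg_of_pos (by norm_num) hu)
  have hA : Tendsto (fun u : ℝ => (exp (-1/u) - 1) / (-1/u)) atTop (nhds 1) :=
    hslope.comp hneg
  have hzmul : Tendsto (fun u : ℝ => z * u) atTop atTop :=
    Tendsto.const_mul_atTop hz0 tendsto_id
  have hAz : Tendsto (fun u : ℝ => (exp (-1/(z*u)) - 1) / (-1/(z*u))) atTop (nhds 1) :=
    hA.comp hzmul
  have hGt : Tendsto (fun u : ℝ =>
      ((exp (-1/(z*u)) - 1) / (-1/(z*u))) / (z * ((exp (-1/u) - 1) / (-1/u))))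
      atTop (nhds (1 / (z * 1))) :=
    hAz.div (tendsto_const_nhds.mul hA) (by rw [mul_one]; exact ne_of_gt hz0)
  have hrw : ∀ v : ℝ, v ≠ 0 → (exp (-1/v) - 1) / (-1/v) = (1 - exp (-1/v)) * v := by
    intro v hv
    field_simp
    ring
  have hFt : Tendsto F atTop (nhds (1/z)) := by
    refine Tendsto.congr' ?_ (by simpa using hGt)
    filter_upwards [eventually_gt_atTop (0:ℝ)] with u hu
    have hu0 : u ≠ 0 := ne_of_gt hu
    have hzu0 : z * u ≠ 0 := by positivity
    have hden : (1:ℝ) - exp (-1 / u) ≠ 0 := by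
      have : exp (-1 / u) < 1 := exp_lt_one_iff.mpr (by
        rw [neg_div]; exact neg_neg_iff_pos.mpr (by positivity))
      linarith
    rw [hrw u hu0, hrw (z*u) hzu0, hFdef]
    field_simp
  have hgb : IsCoboundedUnder (· ≥ ·) atTop g := by
    apply Filter.IsBoundedUnder.isCoboundedUnder_ge
    apply isBoundedUnder_of
    refine ⟨1, fun u => ?_⟩
    apply div_le_one_of_le₀
    · exact (ENNReal.toReal_le_toReal (measure_ne_top μ _) (measure_ne_top μ _)).mpr
        (measure_mono fun ω h => h.2)
    · exact ENNReal.toReal_nonneg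
  have hFb : IsBoundedUnder (· ≥ ·) atTop F := hFt.isBoundedUnder_ge
  calc (1:ℝ)/z = liminf F atTop := hFt.liminf_eq.symm
    _ ≤ liminf g atTop := liminf_le_liminf hFle hFb hgb
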